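/- Consider the 2D lattice Kuramoto model with nearest neighbor coupling (r = 1) and the (q1,q2)-twisted state, where |q1|, |q2| ≤ ⌊L/2⌋. If 4·max{|q1|, |q2|} > L, then the Jacobian matrix J at the twisted state has a positive eigenvalue; equivalently, there exists x ∈ ℝⁿ with xᵀ J x > 0 (so the twisted state is linearly unstable). -/

import Mathlib

noncomputable section
open Real Finset Matrix

/-- Toroidal squared distance on the 2D lattice `(ZMod L)²`. -/
def torDist2 (L : ℕ) (x y : ZMod L × ZMod L) : ℕ :=
  (min ((x.1.val : ℤ) - (y.1.val : ℤ)).natAbs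
      (L - ((x.1.val : ℤ) - (y.1.val : ℤ)).natAbs)) ^ 2
  + (min ((x.2.val : ℤ) - (y.2.val : ℤ)).natAbs
      (L - ((x.2.val : ℤ) - (y.2.val : ℤ)).natAbs)) ^ 2

/-- Adjacency with (integer) squared coupling range `r2`:
`A(x,y) = 1` iff `0 < d(x,y) ≤ r2`, else `0`. -/
def adjN2 (L r2 : ℕ) (x y : ZMod L × ZMod L) : ℝ :=
  if 0 < torDist2 L x y ∧ torDist2 L x y ≤ r2 then 1 else 0

/-- The `(q1,q2)`-twisted state `θ_{i,j} = 2π q1 i / L + 2π q2 j / L + C`. -/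
def twisted2 (L : ℕ) (q1 q2 : ℤ) (C : ℝ) (x : ZMod L × ZMod L) : ℝ :=
  2 * π * q1 * x.1.val / L + 2 * π * q2 * x.2.val / L + C

/-- The Jacobian of the 2D lattice Kuramoto model (squared range `r2`) at a configuration `u`. -/
def jac2 (L : ℕ) [NeZero L] (r2 : ℕ) (u : ZMod L × ZMod L → ℝ) :
    Matrix (ZMod L × ZMod L) (ZMod L × ZMod L) ℝ :=
  fun x y =>
    if x = y then -∑ z, adjN2 L r2 x z * Real.cos (u z - u x)
    else adjN2 L r2 x y * Real.cos (u y - u x)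


/-! ### Auxiliary lemmas -/

lemma aux_sq_add_sq_eq_one (p q : ℕ) (h : p^2 + q^2 = 1) : (p = 1 ∧ q = 0) ∨ (p = 0 ∧ q = 1) := by
  have hp : p ≤ 1 := by nlinarith
  have hq : q ≤ 1 := by nlinarith
  interval_cases p <;> interval_cases q <;> omega

lemma aux_eig_of_posform {n : Type*} [Fintype n] [DecidableEq n] (A : Matrix n n ℝ)
    (hA : A.IsHermitian) (x : n → ℝ) (hx : 0 < x ⬝ᵥ A.mulVec x) :
    ∃ μ : ℝ, 0 < μ ∧ Module.End.HasEigenvalue (Matrix.toLin' A) μ := by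
  have hj : ∃ j, 0 < hA.eigenvalues j := by
    by_contra hc
    push_neg at hc
    set U : Matrix n n ℝ := (hA.eigenvectorUnitary : Matrix n n ℝ) with hU
    have hspec := hA.spectral_theorem
    set y : n → ℝ := (star U) *ᵥ x with hy
    have h1 : x ⬝ᵥ A.mulVec x = ∑ i, hA.eigenvalues i * (y i)^2 := by
      conv_lhs => rw [hspec, Unitary.conjStarAlgAut_apply]
      rw [← Matrix.mulVec_mulVec, ← Matrix.mulVec_mulVec]
      rw [dotProduct_mulVec x U]
      have hvU : x ᵥ* U = y := by
        ext i
        simp [hy, Matrix.vecMul, Matrix.mulVec, dotProduct, Matrix.conjTranspose_apply,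
          mul_comm]
      rw [hvU]
      simp [Matrix.mulVec_diagonal, dotProduct, mul_comm, pow_two]
      ring_nf
      apply Finset.sum_congr rfl
      intro i _
      ring
    have : x ⬝ᵥ A.mulVec x ≤ 0 := by
      rw [h1]
      apply Finset.sum_nonpos
      intro i _
      exact mul_nonpos_of_nonpos_of_nonneg (hc i) (sq_nonneg _)
    linarith
  obtain ⟨j, hj⟩ := hj
  refine ⟨_, hj, Module.End.hasEigenvalue_of_hasEigenvector (x := ⇑(hA.eigenvectorBasis j)) ⟨?_, ?_⟩⟩
  · rw [Module.End.mem_eigenspace_iff, Matrix.toLin'_apply, hA.mulVec_eigenvectorBasis]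
  · intro hzero
    have := hA.eigenvectorBasis.toBasis.ne_zero j
    apply this
    ext i
    exact congrFun hzero i

lemma aux_torDist2_symm (L : ℕ) (a b : ZMod L × ZMod L) : torDist2 L a b = torDist2 L b a := by
  have h1 : (((a.1.val : ℤ)) - b.1.val).natAbs = (((b.1.val : ℤ)) - a.1.val).natAbs := by omega
  have h2 : (((a.2.val : ℤ)) - b.2.val).natAbs = (((b.2.val : ℤ)) - a.2.val).natAbs := by omega
  unfold torDist2
  rw [h1, h2]

lemma aux_jac2_isHermitian (L : ℕ) [NeZero L] (r2 : ℕ) (u : ZMod L × ZMod L → ℝ) :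
    (jac2 L r2 u).IsHermitian := by
  unfold Matrix.IsHermitian
  ext a b
  rw [Matrix.conjTranspose_apply, star_trivial]
  by_cases hab : a = b
  · subst hab; rfl
  · have hba : ¬ (b = a) := fun hc => hab hc.symm
    unfold jac2
    rw [if_neg hba, if_neg hab]
    have hadj : adjN2 L r2 b a = adjN2 L r2 a b := by
      unfold adjN2
      rw [aux_torDist2_symm L b a]
    rw [hadj, ← Real.cos_neg, neg_sub]

lemma aux_torDist2_swap (L : ℕ) (a b : ZMod L × ZMod L) :
    torDist2 L a.swap b.swap = torDist2 L a b := by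
  simp [torDist2, Prod.swap]
  ring

lemma aux_adjN2_swap (L r2 : ℕ) (a b : ZMod L × ZMod L) :
    adjN2 L r2 a.swap b.swap = adjN2 L r2 a b := by
  simp [adjN2, aux_torDist2_swap]

lemma aux_twisted2_swap (L : ℕ) (q1 q2 : ℤ) (C : ℝ) (a : ZMod L × ZMod L) :
    twisted2 L q1 q2 C a.swap = twisted2 L q2 q1 C a := by
  simp [twisted2, Prod.swap]
  ring

lemma aux_jac2_swap (L : ℕ) [NeZero L] (q1 q2 : ℤ) (C : ℝ) (a b : ZMod L × ZMod L) :
    jac2 L 1 (twisted2 L q1 q2 C) a.swap b.swap = jac2 L 1 (twisted2 L q2 q1 C) a b := by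
  unfold jac2
  by_cases hab : a = b
  · subst hab
    rw [if_pos rfl, if_pos rfl, neg_inj]
    refine Fintype.sum_equiv (Equiv.prodComm (ZMod L) (ZMod L)) _ _ ?_
    intro z
    simp only [Equiv.prodComm_apply]
    show adjN2 L 1 a.swap z * cos (twisted2 L q1 q2 C z - twisted2 L q1 q2 C a.swap)
      = adjN2 L 1 a z.swap * cos (twisted2 L q2 q1 C z.swap - twisted2 L q2 q1 C a)
    have h1 : adjN2 L 1 a z.swap = adjN2 L 1 a.swap z := by
      rw [← aux_adjN2_swap L 1 a z.swap, Prod.swap_swap]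
    rw [h1, aux_twisted2_swap L q2 q1, ← aux_twisted2_swap L q1 q2 C a]
  · have hab' : ¬ (a.swap = b.swap) := fun hc => hab (by
      have := congrArg Prod.swap hc; simpa using this)
    rw [if_neg hab', if_neg hab, aux_adjN2_swap, aux_twisted2_swap, aux_twisted2_swap]

lemma aux_form_swap (L : ℕ) [NeZero L] (q1 q2 : ℤ) (C : ℝ) (x : ZMod L × ZMod L → ℝ) :
    (x ∘ Prod.swap) ⬝ᵥ (jac2 L 1 (twisted2 L q1 q2 C)).mulVec (x ∘ Prod.swap)
      = x ⬝ᵥ (jac2 L 1 (twisted2 L q2 q1 C)).mulVec x := by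
  simp only [dotProduct, Matrix.mulVec, Function.comp_apply]
  refine Fintype.sum_equiv (Equiv.prodComm (ZMod L) (ZMod L)) _ _ ?_
  intro a
  simp only [Equiv.prodComm_apply, Prod.swap_swap]
  congr 1
  refine Fintype.sum_equiv (Equiv.prodComm (ZMod L) (ZMod L)) _ _ ?_
  intro b
  simp only [Equiv.prodComm_apply, Prod.swap_swap]
  rw [aux_jac2_swap L q2 q1 C a b]

lemma aux_key (L : ℕ) [NeZero L] (q1 q2 : ℤ) (C : ℝ)
    (hq1 : 2 * |q1| ≤ (L : ℤ)) (h : (L : ℤ) < 4 * |q1|) :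
    ∃ x : ZMod L × ZMod L → ℝ,
      0 < x ⬝ᵥ (jac2 L 1 (twisted2 L q1 q2 C)).mulVec x := by
  have habs : (0:ℤ) ≤ |q1| := abs_nonneg _
  have hL2 : 2 ≤ L := by
    rcases Nat.lt_or_ge L 2 with hL | hL
    · exfalso
      have hL1 : L = 1 := by
        have := NeZero.ne L; omega
      subst hL1
      simp at hq1
      omega
    · exact hL
  have hL0 : (0:ℝ) < L := by positivity
  have hLR : (L:ℝ) ≠ 0 := ne_of_gt hL0
  set u := twisted2 L q1 q2 C with hu
  set c1 := Real.cos (2 * π * q1 / L) with hc1def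
  -- c1 < 0
  have hc1 : c1 < 0 := by
    have hcabs : c1 = Real.cos (2 * π * |(q1:ℝ)| / L) := by
      rw [hc1def, ← Real.cos_abs (2 * π * q1 / L)]
      congr 1
      rw [abs_div, abs_of_pos hL0, abs_mul, abs_mul, abs_two, abs_of_pos Real.pi_pos]
    rw [hcabs]
    have hq1R : (L:ℝ) < 4 * |(q1:ℝ)| := by exact_mod_cast h
    have hq1R' : 2 * |(q1:ℝ)| ≤ (L:ℝ) := by exact_mod_cast hq1
    have hπ := Real.pi_pos
    apply Real.cos_neg_of_pi_div_two_lt_of_lt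
    · rw [lt_div_iff₀ hL0] at *
      nlinarith
    · have : 2 * π * |(q1:ℝ)| / L ≤ π := by
        rw [div_le_iff₀ hL0]
        nlinarith
      nlinarith
  -- the weight function
  set w : (ZMod L × ZMod L) → (ZMod L × ZMod L) → ℝ :=
    fun a b => adjN2 L 1 a b * Real.cos (u b - u a) with hw
  have hwaa : ∀ a, w a a = 0 := by
    intro a
    simp [hw, adjN2, torDist2]
  -- the test vector
  set x : ZMod L × ZMod L → ℝ := fun a => if a.1 = 0 then 1 else 0 with hx
  refine ⟨x, ?_⟩
  -- key neighbor computation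
  have hW : ∀ a b : ZMod L × ZMod L, a.1 = 0 → b.1 ≠ 0 →
      w a b = if (b.2 = a.2 ∧ (b.1.val = 1 ∨ b.1.val = L - 1)) then c1 else 0 := by
    rintro ⟨a1, a2⟩ ⟨b1, b2⟩ ha hb
    simp only at ha hb
    subst ha
    have hv1 : b1.val ≠ 0 := fun hc => hb (ZMod.val_injective L
      (show b1.val = (0 : ZMod L).val by rw [hc, ZMod.val_zero]))
    have hv1L : b1.val < L := ZMod.val_lt b1
    have hv2L : b2.val < L := ZMod.val_lt b2
    have ha2L : a2.val < L := ZMod.val_lt a2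
    have hn1 : (((0 : ZMod L).val : ℤ) - (b1.val : ℤ)).natAbs = b1.val := by
      rw [ZMod.val_zero]
      omega
    set n2 := (((a2.val : ℤ)) - (b2.val : ℤ)).natAbs with hn2def
    have hn2L : n2 < L := by omega
    have hd : torDist2 L ((0 : ZMod L), a2) (b1, b2)
        = (min b1.val (L - b1.val))^2 + (min n2 (L - n2))^2 := by
      simp only [torDist2, hn1, hn2def]
    by_cases hcond : b2 = a2 ∧ (b1.val = 1 ∨ b1.val = L - 1)
    · obtain ⟨hb2, hcase⟩ := hcond
      have hn2z : n2 = 0 := by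
        rw [hn2def, hb2]
        simp
      have hdist : torDist2 L ((0 : ZMod L), a2) (b1, b2) = 1 := by
        rw [hd, hn2z]
        have : min b1.val (L - b1.val) = 1 := by omega
        rw [this]
        simp
      have hadj : adjN2 L 1 ((0 : ZMod L), a2) (b1, b2) = 1 := by
        simp [adjN2, hdist]
      have hb2v : (b2.val : ℝ) = (a2.val : ℝ) := by rw [hb2]
      have hcos : Real.cos (u (b1, b2) - u ((0 : ZMod L), a2)) = c1 := by
        have harg : u (b1, b2) - u ((0 : ZMod L), a2) = 2 * π * q1 * b1.val / L := by
          simp only [hu, twisted2, ZMod.val_zero]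
          rw [hb2v]
          ring
        rw [harg]
        rcases hcase with h1 | h1
        · rw [h1]
          norm_num
          exact hc1def.symm
        · rw [h1, hc1def]
          have hcast : ((L - 1 : ℕ) : ℝ) = (L : ℝ) - 1 := by
            have : 1 ≤ L := by omega
            push_cast [this]
            ring
          have harg2 : 2 * π * q1 * ((L - 1 : ℕ) : ℝ) / L = q1 * (2 * π) - 2 * π * q1 / L := by
            rw [hcast]
            field_simp
          rw [harg2, Real.cos_int_mul_two_pi_sub]
      rw [hw]
      simp only [hadj, one_mul, hcos]
      rw [if_pos ⟨hb2, hcase⟩]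
    · have hdist : ¬ (0 < torDist2 L ((0 : ZMod L), a2) (b1, b2)
          ∧ torDist2 L ((0 : ZMod L), a2) (b1, b2) ≤ 1) := by
        rintro ⟨hpos, hle⟩
        have h1 : torDist2 L ((0 : ZMod L), a2) (b1, b2) = 1 := by omega
        rw [hd] at h1
        rcases aux_sq_add_sq_eq_one _ _ h1 with ⟨hm1, hm2⟩ | ⟨hm1, hm2⟩
        · -- m1 = 1, m2 = 0 : get n1 info and n2 = 0
          have hb1v : b1.val = 1 ∨ b1.val = L - 1 := by omega
          have hn2z : n2 = 0 := by omega
          have hvals : a2.val = b2.val := by omega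
          have hb2 : b2 = a2 := ZMod.val_injective L (show b2.val = a2.val by omega)
          exact hcond ⟨hb2, hb1v⟩
        · -- m1 = 0 impossible since 0 < b1.val < L
          omega
      rw [hw]
      simp only [adjN2, if_neg hdist, zero_mul]
      rw [if_neg hcond]
  -- pointwise form of the summand
  have hpoint : ∀ a b : ZMod L × ZMod L,
      x a * w a b * (x b - x a)
        = if (a.1 = 0 ∧ b.2 = a.2 ∧ (b.1.val = 1 ∨ b.1.val = L - 1)) then -c1 else 0 := by
    intro a b
    by_cases ha : a.1 = 0
    · by_cases hb : b.1 = 0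
      · have hzero : x b - x a = 0 := by rw [hx]; simp [ha, hb]
        have hne : ¬ (a.1 = 0 ∧ b.2 = a.2 ∧ (b.1.val = 1 ∨ b.1.val = L - 1)) := by
          rintro ⟨-, -, hv⟩
          rw [hb, ZMod.val_zero] at hv
          omega
        rw [hzero, mul_zero, if_neg hne]
      · have hxa : x a = 1 := by rw [hx]; simp [ha]
        have hxb : x b = 0 := by rw [hx]; simp [hb]
        rw [hxa, hxb, hW a b ha hb]
        by_cases hc : (b.2 = a.2 ∧ (b.1.val = 1 ∨ b.1.val = L - 1))
        · rw [if_pos hc, if_pos ⟨ha, hc⟩]; ring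
        · rw [if_neg hc, if_neg (fun hh => hc ⟨hh.2.1, hh.2.2⟩)]; ring
    · have hxa : x a = 0 := by rw [hx]; simp [ha]
      rw [hxa, if_neg (fun hh => ha hh.1)]
      ring
  -- rewrite the quadratic form
  have hform : x ⬝ᵥ (jac2 L 1 u).mulVec x = ∑ a, ∑ b, x a * w a b * (x b - x a) := by
    simp only [dotProduct, Matrix.mulVec]
    apply Finset.sum_congr rfl
    intro a _
    have hrow : ∑ b, (jac2 L 1 u) a b * x b
        = (∑ b, w a b * x b) - (∑ z, w a z) * x a := by
      have hterm : ∀ b, (jac2 L 1 u) a b * x b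
          = w a b * x b + (if a = b then (-(∑ z, w a z) - w a b) * x b else 0) := by
        intro b
        by_cases hab : a = b
        · subst hab
          simp only [jac2, if_pos rfl, hwaa a, if_true, eq_self_iff_true]
          ring
        · simp only [jac2, if_neg hab, hw]
          ring
      rw [Finset.sum_congr rfl (fun b _ => hterm b), Finset.sum_add_distrib,
        Finset.sum_ite_eq]
      simp only [Finset.mem_univ, if_true, hwaa a]
      ring
    rw [hrow, mul_sub, Finset.sum_mul, Finset.mul_sum, Finset.mul_sum,
      ← Finset.sum_sub_distrib]
    apply Finset.sum_congr rfl
    intro b _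
    ring
  rw [hform]
  have hform2 : ∑ a, ∑ b, x a * w a b * (x b - x a)
      = ∑ p : (ZMod L × ZMod L) × (ZMod L × ZMod L),
          if (p.1.1 = 0 ∧ p.2.2 = p.1.2 ∧ (p.2.1.val = 1 ∨ p.2.1.val = L - 1)) then -c1 else 0 := by
    rw [← Finset.sum_product']
    apply Finset.sum_congr rfl
    intro p _
    exact hpoint p.1 p.2
  rw [hform2, Finset.sum_ite, Finset.sum_const, Finset.sum_const_zero, add_zero]
  have hmem : (((0 : ZMod L), (0 : ZMod L)), ((1 : ZMod L), (0 : ZMod L))) ∈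
      Finset.univ.filter (fun p : (ZMod L × ZMod L) × (ZMod L × ZMod L) =>
        p.1.1 = 0 ∧ p.2.2 = p.1.2 ∧ (p.2.1.val = 1 ∨ p.2.1.val = L - 1)) := by
    refine Finset.mem_filter.2 ⟨Finset.mem_univ _, rfl, rfl, Or.inl ?_⟩
    exact ZMod.val_one'' (by omega)
  have hcard : 0 < (Finset.univ.filter (fun p : (ZMod L × ZMod L) × (ZMod L × ZMod L) =>
        p.1.1 = 0 ∧ p.2.2 = p.1.2 ∧ (p.2.1.val = 1 ∨ p.2.1.val = L - 1))).card :=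
    Finset.card_pos.2 ⟨_, hmem⟩
  rw [nsmul_eq_mul]
  have : (0:ℝ) < -c1 := by linarith
  positivity


/-- Nearest neighbor coupling (`r = 1`), `|q1|, |q2| ≤ ⌊L/2⌋`: if `4 max{|q1|,|q2|} > L` then the
Jacobian at the `(q1,q2)`-twisted state has a positive eigenvalue; equivalently there is `x` with
`xᵀ J x > 0` (the twisted state is linearly unstable). -/
theorem nearest_neighbor_unstable (L : ℕ) [NeZero L] (q1 q2 : ℤ) (C : ℝ)
    (hq1 : |q1| ≤ (L : ℤ) / 2) (hq2 : |q2| ≤ (L : ℤ) / 2)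
    (h : (L : ℤ) < 4 * max |q1| |q2|) :
    (∃ μ : ℝ, 0 < μ ∧ Module.End.HasEigenvalue
      (Matrix.toLin' (jac2 L 1 (twisted2 L q1 q2 C))) μ) ∧
    ∃ x : ZMod L × ZMod L → ℝ, 0 < x ⬝ᵥ (jac2 L 1 (twisted2 L q1 q2 C)).mulVec x := by
  have hform : ∃ x : ZMod L × ZMod L → ℝ,
      0 < x ⬝ᵥ (jac2 L 1 (twisted2 L q1 q2 C)).mulVec x := by
    rcases le_or_gt |q2| |q1| with hmax | hmax
    · rw [max_eq_left hmax] at h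
      have hq1' : 2 * |q1| ≤ (L : ℤ) := by omega
      exact aux_key L q1 q2 C hq1' h
    · rw [max_eq_right hmax.le] at h
      have hq2' : 2 * |q2| ≤ (L : ℤ) := by omega
      obtain ⟨x, hx⟩ := aux_key L q2 q1 C hq2' h
      exact ⟨x ∘ Prod.swap, by rw [aux_form_swap L q1 q2 C x]; exact hx⟩
  obtain ⟨x, hx⟩ := hform
  exact ⟨aux_eig_of_posform _ (aux_jac2_isHermitian L 1 _) x hx, ⟨x, hx⟩⟩
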